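/- For a pure bipartite state |ψ⟩ = Σ_i √λ_i |i,i⟩ with all λ_i > 0 and pairwise distinct, if {|f_k⟩_A} and {|g_l⟩_B} are local orthonormal bases in which the reduced states ρ_A and ρ_B are both diagonal, then the l1-norm of coherence of |ψ⟩⟨ψ| in the product basis {|f_k⟩⊗|g_l⟩} equals Σ_{i≠j} √(λ_i λ_j). -/

import Mathlib

open scoped BigOperators Matrix

def proj {ι : Type*} (v : ι → ℂ) : Matrix ι ι ℂ :=
  Matrix.vecMulVec v (star v)

def tens {ιA ιB : Type*} (a : ιA → ℂ) (b : ιB → ℂ) : ιA × ιB → ℂ :=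
  fun p => a p.1 * b p.2

noncomputable def ptrB {d : ℕ}
    (M : Matrix (Fin d × Fin d) (Fin d × Fin d) ℂ) :
    Matrix (Fin d) (Fin d) ℂ :=
  fun i j => ∑ y : Fin d, M (i, y) (j, y)

noncomputable def ptrA {d : ℕ}
    (M : Matrix (Fin d × Fin d) (Fin d × Fin d) ℂ) :
    Matrix (Fin d) (Fin d) ℂ :=
  fun i j => ∑ x : Fin d, M (x, i) (x, j)

lemma sum_offdiag {ι : Type*} [Fintype ι] [DecidableEq ι] (x : ι → ℝ) :
    (∑ p : ι, ∑ q : ι, if p ≠ q then x p * x q else 0) =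
      (∑ p, x p) ^ 2 - ∑ p, (x p) ^ 2 := by
  have h1 : ∀ p : ι, (∑ q : ι, if p ≠ q then x p * x q else 0)
      = (∑ q : ι, x p * x q) - x p * x p := by
    intro p
    have : ∀ q : ι, (if p ≠ q then x p * x q else 0)
        = x p * x q - (if p = q then x p * x q else 0) := by
      intro q
      by_cases h : p = q <;> simp [h]
    simp [this, Finset.sum_sub_distrib]
  simp_rw [h1, Finset.sum_sub_distrib, ← Finset.mul_sum, ← Finset.sum_mul, sq]

lemma extract {d : ℕ} (lam : Fin d → ℝ)
    (hdistinct : ∀ i j : Fin d, i ≠ j → lam i ≠ lam j)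
    (f : Fin d → Fin d → ℂ)
    (hf : ∀ k l, ∑ m, star (f k m) * f l m = if k = l then 1 else 0)
    (hdiag : ∀ k l : Fin d, k ≠ l →
      ∑ m, star (f k m) * ((lam m : ℂ) * f l m) = 0) :
    ∃ σ : Equiv.Perm (Fin d), (∀ k m, m ≠ σ k → f k m = 0) ∧
      (∀ k, ‖f k (σ k)‖ = 1) := by
  classical
  -- completeness
  set V : Matrix (Fin d) (Fin d) ℂ := Matrix.of fun m k => f k m with hV
  have hVhV : Vᴴ * V = 1 := by
    ext k l
    simp only [Matrix.mul_apply, Matrix.conjTranspose_apply, Matrix.one_apply, hV,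
      Matrix.of_apply]
    exact hf k l
  have hVVh : V * Vᴴ = 1 := mul_eq_one_comm.mp hVhV
  have hcomp : ∀ a b : Fin d, (∑ k, f k a * star (f k b)) = if a = b then 1 else 0 := by
    intro a b
    have := congrFun (congrFun hVVh a) b
    simpa [Matrix.mul_apply, Matrix.conjTranspose_apply, Matrix.one_apply, hV] using this
  -- eigenvector property
  have heig : ∀ k a, (lam a : ℂ) * f k a =
      (∑ b, star (f k b) * ((lam b : ℂ) * f k b)) * f k a := by
    intro k a
    have step1 : (lam a : ℂ) * f k a =
        ∑ l, f l a * ∑ b, star (f l b) * ((lam b : ℂ) * f k b) := by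
      have : ∀ l : Fin d, f l a * ∑ b, star (f l b) * ((lam b : ℂ) * f k b)
          = ∑ b, f l a * star (f l b) * ((lam b : ℂ) * f k b) := by
        intro l; rw [Finset.mul_sum]; exact Finset.sum_congr rfl (by intros; ring)
      simp_rw [this]
      rw [Finset.sum_comm]
      have : ∀ b : Fin d, (∑ l, f l a * star (f l b) * ((lam b : ℂ) * f k b))
          = (∑ l, f l a * star (f l b)) * ((lam b : ℂ) * f k b) := by
        intro b; rw [Finset.sum_mul]
      simp_rw [this, hcomp]
      simp [Finset.sum_ite_eq, mul_comm, mul_left_comm]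
    rw [step1, Finset.sum_eq_single k]
    · ring
    · intro l _ hl
      rw [hdiag l k hl, mul_zero]
    · intro h; exact absurd (Finset.mem_univ k) h
  -- unique support
  have hsupp : ∀ k a b, f k a ≠ 0 → f k b ≠ 0 → a = b := by
    intro k a b ha hb
    have ea := heig k a
    have eb := heig k b
    have ha' : (lam a : ℂ) = ∑ b, star (f k b) * ((lam b : ℂ) * f k b) :=
      mul_right_cancel₀ ha ea
    have hb' : (lam b : ℂ) = ∑ b', star (f k b') * ((lam b' : ℂ) * f k b') :=
      mul_right_cancel₀ hb eb
    have : (lam a : ℂ) = (lam b : ℂ) := ha'.trans hb'.symm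
    have : lam a = lam b := by exact_mod_cast this
    by_contra hne
    exact hdistinct a b hne this
  have hex : ∀ k, ∃ a, f k a ≠ 0 := by
    intro k
    by_contra h
    push_neg at h
    have := hf k k
    simp [h] at this
  choose σ0 hσ0 using hex
  have hzero : ∀ k m, m ≠ σ0 k → f k m = 0 := by
    intro k m hm
    by_contra h
    exact hm (hsupp k m (σ0 k) h (hσ0 k))
  have hnorm : ∀ k, ‖f k (σ0 k)‖ = 1 := by
    intro k
    have h1 := hf k k
    rw [if_pos rfl, Finset.sum_eq_single (σ0 k)] at h1
    · have : (Complex.normSq (f k (σ0 k)) : ℂ) = 1 := by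
        rw [← h1]; rw [Complex.star_def, mul_comm, Complex.mul_conj]
      have h2 : Complex.normSq (f k (σ0 k)) = 1 := by exact_mod_cast this
      rw [Complex.norm_def, h2, Real.sqrt_one]
    · intro b _ hb; rw [hzero k b hb, mul_zero]
    · intro h; exact absurd (Finset.mem_univ _) h
  have hinj : Function.Injective σ0 := by
    intro k l hkl
    by_contra hne
    have := hf k l
    rw [if_neg hne, Finset.sum_eq_single (σ0 k)] at this
    · have h1 : f k (σ0 k) ≠ 0 := hσ0 k
      have h2 : f l (σ0 k) ≠ 0 := by rw [hkl]; exact hσ0 l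
      exact (mul_ne_zero (star_ne_zero.mpr h1) h2) this
    · intro b _ hb; rw [hzero k b hb, star_zero, zero_mul]
    · intro h; exact absurd (Finset.mem_univ _) h
  refine ⟨Equiv.ofBijective σ0 (Finite.injective_iff_bijective.mp hinj), ?_, hnorm⟩
  intro k m hm
  exact hzero k m hm

/-- For |ψ⟩ = Σ_i √λ_i |i,i⟩ with positive pairwise distinct λ_i,
if {f_k} and {g_l} are local orthonormal bases diagonalizing ρ_A and ρ_B
respectively, then the l1-norm of coherence of |ψ⟩⟨ψ| in the product basis
{f_k ⊗ g_l} equals Σ_{i≠j} √(λ_i λ_j). -/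
theorem stmt16 (d : ℕ) (lam : Fin d → ℝ)
    (hpos : ∀ i, 0 < lam i) (hsum : ∑ i, lam i = 1)
    (hdistinct : ∀ i j : Fin d, i ≠ j → lam i ≠ lam j)
    (ψ : Fin d × Fin d → ℂ)
    (hψ : ∀ p, ψ p = if p.1 = p.2 then (Real.sqrt (lam p.1) : ℂ) else 0)
    (ρ : Matrix (Fin d × Fin d) (Fin d × Fin d) ℂ)
    (hρ : ρ = proj ψ)
    (f g : Fin d → Fin d → ℂ)
    (hf : ∀ k l, ∑ m, star (f k m) * f l m = if k = l then 1 else 0)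
    (hg : ∀ k l, ∑ m, star (g k m) * g l m = if k = l then 1 else 0)
    (hfdiag : ∀ k l : Fin d, k ≠ l →
      star (f k) ⬝ᵥ (ptrB ρ).mulVec (f l) = 0)
    (hgdiag : ∀ k l : Fin d, k ≠ l →
      star (g k) ⬝ᵥ (ptrA ρ).mulVec (g l) = 0) :
    (∑ p : Fin d × Fin d, ∑ q : Fin d × Fin d,
      if p ≠ q then
        ‖star (tens (f p.1) (g p.2)) ⬝ᵥ
          ρ.mulVec (tens (f q.1) (g q.2))‖
      else 0) =
    ∑ i : Fin d, ∑ j : Fin d,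
      if i ≠ j then Real.sqrt (lam i * lam j) else 0 := by
  classical
  -- ρ entries
  have hρe : ∀ p q : Fin d × Fin d, ρ p q = ψ p * star (ψ q) := by
    intro p q; rw [hρ]; rfl
  -- partial traces are diagonal
  have hsingle : ∀ (a b y : Fin d),
      ψ (a, y) * star (ψ (b, y)) =
        if a = b ∧ y = a then ((lam a : ℝ) : ℂ) else 0 := by
    intro a b y
    rw [hψ (a, y), hψ (b, y)]
    by_cases h1 : a = y
    · subst h1
      by_cases h2 : b = a
      · subst h2
        simp only [eq_self_iff_true, and_self, if_true, Complex.star_def,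
          Complex.conj_ofReal]
        rw [← Complex.ofReal_mul, Real.mul_self_sqrt (hpos _).le]
      · rw [if_neg h2, star_zero, mul_zero, if_neg (fun h => h2 h.1.symm)]
    · rw [if_neg h1, zero_mul, if_neg (fun h => h1 h.2.symm)]
  have hptrB : ptrB ρ = Matrix.diagonal (fun i => ((lam i : ℝ) : ℂ)) := by
    ext i j
    simp only [ptrB, hρe, hsingle, Matrix.diagonal_apply]
    by_cases h : i = j
    · subst h; simp
    · simp [h]
  have hptrA : ptrA ρ = Matrix.diagonal (fun i => ((lam i : ℝ) : ℂ)) := by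
    ext i j
    have hsingle' : ∀ (a b x : Fin d),
        ψ (x, a) * star (ψ (x, b)) =
          if a = b ∧ x = a then ((lam a : ℝ) : ℂ) else 0 := by
      intro a b x
      rw [hψ (x, a), hψ (x, b)]
      by_cases h1 : x = a
      · subst h1
        by_cases h2 : x = b
        · subst h2
          simp only [eq_self_iff_true, and_self, if_true, Complex.star_def,
            Complex.conj_ofReal]
          rw [← Complex.ofReal_mul, Real.mul_self_sqrt (hpos _).le]
        · rw [if_neg h2, star_zero, mul_zero, if_neg (fun h => h2 h.1)]
      · rw [if_neg h1, zero_mul, if_neg (fun h => h1 h.2)]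
    simp only [ptrA, hρe, hsingle', Matrix.diagonal_apply]
    by_cases h : i = j
    · subst h; simp
    · simp [h]
  -- diagonalization conditions in sum form
  have hfd : ∀ k l : Fin d, k ≠ l →
      ∑ m, star (f k m) * ((lam m : ℂ) * f l m) = 0 := by
    intro k l hkl
    have := hfdiag k l hkl
    rw [hptrB] at this
    simpa [dotProduct, Matrix.mulVec_diagonal] using this
  have hgd : ∀ k l : Fin d, k ≠ l →
      ∑ m, star (g k m) * ((lam m : ℂ) * g l m) = 0 := by
    intro k l hkl
    have := hgdiag k l hkl
    rw [hptrA] at this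
    simpa [dotProduct, Matrix.mulVec_diagonal] using this
  obtain ⟨σ, hfzero, hfnorm⟩ := extract lam hdistinct f hf hfd
  obtain ⟨τ, hgzero, hgnorm⟩ := extract lam hdistinct g hg hgd
  -- the vector overlap
  have key : ∀ k l : Fin d, ‖star (tens (f k) (g l)) ⬝ᵥ ψ‖ =
      (if σ k = τ l then Real.sqrt (lam (σ k)) else 0) := by
    intro k l
    have hsum1 : star (tens (f k) (g l)) ⬝ᵥ ψ =
        ∑ a : Fin d, star (f k a) * star (g l a) * (Real.sqrt (lam a) : ℂ) := by
      simp only [dotProduct, Pi.star_apply, tens, Fintype.sum_prod_type, hψ]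
      refine Finset.sum_congr rfl fun a _ => ?_
      rw [Finset.sum_eq_single a]
      · simp [star_mul']
      · intro b _ hb; simp [Ne.symm hb]
      · intro h; exact absurd (Finset.mem_univ _) h
    rw [hsum1, Finset.sum_eq_single (σ k)]
    · by_cases h : σ k = τ l
      · rw [if_pos h]
        rw [norm_mul, norm_mul]
        have h1 : ‖star (f k (σ k))‖ = 1 := by
          rw [Complex.star_def, Complex.norm_conj]; exact hfnorm k
        have h2 : ‖star (g l (σ k))‖ = 1 := by
          rw [Complex.star_def, Complex.norm_conj, h]; exact hgnorm l
        rw [h1, h2, Complex.norm_real, Real.norm_eq_abs, abs_of_nonneg (Real.sqrt_nonneg _)]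
        ring
      · rw [if_neg h]
        have : g l (σ k) = 0 := hgzero l (σ k) h
        simp [this]
    · intro b _ hb
      rw [hfzero k b hb]
      simp
    · intro h; exact absurd (Finset.mem_univ _) h
  have key' : ∀ k l : Fin d, ‖star ψ ⬝ᵥ tens (f k) (g l)‖ =
      (if σ k = τ l then Real.sqrt (lam (σ k)) else 0) := by
    intro k l
    have : star ψ ⬝ᵥ tens (f k) (g l) = star (star (tens (f k) (g l)) ⬝ᵥ ψ) := by
      simp [dotProduct, star_sum, star_mul', mul_comm]
    rw [this, Complex.star_def, Complex.norm_conj]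
    exact key k l
  -- factor the matrix element
  have hentry : ∀ u v : Fin d × Fin d → ℂ,
      star u ⬝ᵥ ρ.mulVec v = (star u ⬝ᵥ ψ) * (star ψ ⬝ᵥ v) := by
    intro u v
    simp only [dotProduct, Matrix.mulVec, hρe, Pi.star_apply]
    rw [Finset.sum_mul_sum]
    simp_rw [Finset.mul_sum]
    refine Finset.sum_congr rfl fun p _ => Finset.sum_congr rfl fun q _ => by ring
  -- abbreviate
  set A : Fin d × Fin d → ℝ :=
    fun p => if σ p.1 = τ p.2 then Real.sqrt (lam (σ p.1)) else 0 with hA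
  have habs : ∀ p q : Fin d × Fin d,
      ‖star (tens (f p.1) (g p.2)) ⬝ᵥ
        ρ.mulVec (tens (f q.1) (g q.2))‖ = A p * A q := by
    intro p q
    rw [hentry, norm_mul, key p.1 p.2, key' q.1 q.2, hA]
  have hL : (∑ p : Fin d × Fin d, ∑ q : Fin d × Fin d,
      if p ≠ q then
        ‖star (tens (f p.1) (g p.2)) ⬝ᵥ
          ρ.mulVec (tens (f q.1) (g q.2))‖
      else 0) = (∑ p, A p) ^ 2 - ∑ p, (A p) ^ 2 := by
    rw [← sum_offdiag A]
    refine Finset.sum_congr rfl fun p _ => Finset.sum_congr rfl fun q _ => ?_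
    by_cases h : p = q
    · simp [h]
    · rw [if_pos h, if_pos h, habs]
  have hsumA : ∑ p : Fin d × Fin d, A p = ∑ i, Real.sqrt (lam i) := by
    rw [Fintype.sum_prod_type]
    have h1 : ∀ k, (∑ l, A (k, l)) = Real.sqrt (lam (σ k)) := by
      intro k
      have h2 : ∀ l, A (k, l) =
          if l = τ.symm (σ k) then Real.sqrt (lam (σ k)) else 0 := by
        intro l
        simp only [hA]
        exact if_congr (by rw [eq_comm, Equiv.eq_symm_apply, eq_comm]) rfl rfl
      simp_rw [h2, Finset.sum_ite_eq', Finset.mem_univ, if_true]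
    simp_rw [h1]
    exact Equiv.sum_comp σ fun i => Real.sqrt (lam i)
  have hsumA2 : ∑ p : Fin d × Fin d, (A p) ^ 2 = 1 := by
    have h0 : ∀ p : Fin d × Fin d, (A p) ^ 2 =
        if σ p.1 = τ p.2 then lam (σ p.1) else 0 := by
      intro p
      simp only [hA]
      by_cases h : σ p.1 = τ p.2
      · rw [if_pos h, if_pos h, Real.sq_sqrt (hpos _).le]
      · rw [if_neg h, if_neg h]; norm_num
    simp_rw [h0]
    rw [Fintype.sum_prod_type]
    have h1 : ∀ k, (∑ l, if σ k = τ l then lam (σ k) else 0) = lam (σ k) := by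
      intro k
      have h2 : ∀ l, (if σ k = τ l then lam (σ k) else 0) =
          if l = τ.symm (σ k) then lam (σ k) else 0 := by
        intro l
        exact if_congr (by rw [eq_comm, Equiv.eq_symm_apply, eq_comm]) rfl rfl
      simp_rw [h2, Finset.sum_ite_eq', Finset.mem_univ, if_true]
    simp_rw [h1]
    rw [Equiv.sum_comp σ lam]
    exact hsum
  have hR : (∑ i : Fin d, ∑ j : Fin d,
      if i ≠ j then Real.sqrt (lam i * lam j) else 0) =
      (∑ i, Real.sqrt (lam i)) ^ 2 - 1 := by
    have h0 : ∀ i j : Fin d, (if i ≠ j then Real.sqrt (lam i * lam j) else 0) =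
        if i ≠ j then Real.sqrt (lam i) * Real.sqrt (lam j) else 0 :=
      fun i j => if_congr Iff.rfl (Real.sqrt_mul (hpos i).le _) rfl
    simp_rw [h0]
    rw [sum_offdiag fun i => Real.sqrt (lam i)]
    congr 1
    · simp_rw [Real.sq_sqrt (hpos _).le]
      exact hsum
  rw [hL, hR, hsumA, hsumA2]
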